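/- The number of distinct pairs (t, p) arising as (threshold, period) of an element of T_n equals ∑_{k=1}^{n} s(k), where s(k) is the number of distinct orders of elements in the symmetric group S_k. -/

import Mathlib

/-- `t` and `p` are the threshold and period of `x`: the least values with `p > 0`
and `x ^ (t + p) = x ^ t`. -/
def IsThresholdPeriod {M : Type*} [Monoid M] (x : M) (t p : ℕ) : Prop :=
  0 < p ∧ x ^ (t + p) = x ^ t ∧
    (∀ t' p' : ℕ, 0 < p' → x ^ (t' + p') = x ^ t' → t ≤ t') ∧
    (∀ p' : ℕ, 0 < p' → x ^ (t + p') = x ^ t → p ≤ p')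

/-- The number of distinct orders of elements of the symmetric group on k points. -/
noncomputable def numOrders (k : ℕ) : ℕ :=
  (Finset.univ.image fun g : Equiv.Perm (Fin k) => orderOf g).card

section helpers

variable {α : Type*}

lemma end_pow_apply (f : Function.End α) (m : ℕ) (x : α) :
    (f ^ (m + 1)) x = (f ^ m) (f x) := by
  rw [pow_succ]; rfl

lemma end_pow_apply' (f : Function.End α) (m : ℕ) (x : α) :
    (f ^ (m + 1)) x = f ((f ^ m) x) := by
  rw [pow_succ']; rfl

lemma end_pow_add_apply (f : Function.End α) (a b : ℕ) (x : α) :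
    (f ^ (a + b)) x = (f ^ a) ((f ^ b) x) := by
  rw [pow_add]; rfl

lemma perm_pow_apply {β : Type*} (e : Equiv.Perm β) (m : ℕ) (x : β) :
    (e ^ (m + 1)) x = (e ^ m) (e x) := by
  rw [pow_succ]; rfl

end helpers

lemma necessity {n : ℕ} (hn : 1 ≤ n) (f : Function.End (Fin n)) (t p : ℕ)
    (h : IsThresholdPeriod f t p) :
    t < n ∧ ∃ g : Equiv.Perm (Fin (n - t)), orderOf g = p := by
  classical
  obtain ⟨hp, hper, htmin, hpmin⟩ := h
  -- f^p fixes the range of f^t pointwise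
  have hfix : ∀ x : Fin n, (f ^ p) ((f ^ t) x) = (f ^ t) x := by
    intro x
    have := congrFun hper x
    rwa [add_comm, end_pow_add_apply] at this
  set C : Finset (Fin n) := Finset.image (f ^ t) Finset.univ with hCdef
  have hmemC : ∀ y : Fin n, y ∈ C ↔ ∃ x, (f ^ t) x = y := by
    intro y; exact ⟨fun h => by obtain ⟨x, _, hx⟩ := Finset.mem_image.mp h; exact ⟨x, hx⟩,
      fun ⟨x, hx⟩ => Finset.mem_image.mpr ⟨x, Finset.mem_univ _, hx⟩⟩
  have hfixC : ∀ y ∈ C, (f ^ p) y = y := by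
    intro y hy
    obtain ⟨x, rfl⟩ := (hmemC y).mp hy
    exact hfix x
  have hmapsC : ∀ y ∈ C, f y ∈ C := by
    intro y hy
    obtain ⟨x, rfl⟩ := (hmemC y).mp hy
    refine (hmemC _).mpr ⟨f x, ?_⟩
    rw [← end_pow_apply, end_pow_apply']
  have hpowC : ∀ m : ℕ, ∀ y ∈ C, (f ^ m) y ∈ C := by
    intro m
    induction m with
    | zero => intro y hy; exact hy
    | succ m ih =>
        intro y hy
        rw [end_pow_apply]
        exact ih _ (hmapsC y hy)
  -- the permutation induced on the core C
  let e : Equiv.Perm C :=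
    { toFun := fun y => ⟨f y, hmapsC y y.2⟩
      invFun := fun y => ⟨(f ^ (p - 1)) y, hpowC _ y y.2⟩
      left_inv := by
        intro y
        apply Subtype.ext
        show (f ^ (p - 1)) (f y) = (y : Fin n)
        have h1 : (f ^ p) (y : Fin n) = y := hfixC y y.2
        have h2 : p = (p - 1) + 1 := by omega
        rw [h2, end_pow_apply] at h1
        exact h1
      right_inv := by
        intro y
        apply Subtype.ext
        show f ((f ^ (p - 1)) y) = (y : Fin n)
        have h1 : (f ^ p) (y : Fin n) = y := hfixC y y.2
        have h2 : p = (p - 1) + 1 := by omega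
        rw [h2, end_pow_apply'] at h1
        exact h1 }
  have hepow : ∀ (m : ℕ) (y : C), ((e ^ m) y : Fin n) = (f ^ m) y := by
    intro m
    induction m with
    | zero => intro y; simp only [pow_zero]; rfl
    | succ m ih =>
        intro y
        rw [perm_pow_apply, end_pow_apply]
        have : ((e y : C) : Fin n) = f y := rfl
        rw [ih (e y), this]
  -- orderOf e = p
  have horder : orderOf e = p := by
    have hqpos : 0 < orderOf e := orderOf_pos e
    have hq1 : ∀ y ∈ C, (f ^ orderOf e) y = y := by
      intro y hy
      have h1 : (e ^ orderOf e) ⟨y, hy⟩ = ⟨y, hy⟩ := by rw [pow_orderOf_eq_one]; rfl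
      have := congrArg Subtype.val h1
      rwa [hepow] at this
    have hple : p ≤ orderOf e := by
      apply hpmin _ hqpos
      funext x
      rw [add_comm, end_pow_add_apply]
      exact hq1 _ ((hmemC _).mpr ⟨x, rfl⟩)
    have hdvd : orderOf e ∣ p := by
      apply orderOf_dvd_of_pow_eq_one
      apply Equiv.ext
      intro y
      exact Subtype.ext (by rw [hepow]; exact hfixC y y.2)
    exact le_antisymm (Nat.le_of_dvd hp hdvd) hple
  -- cardinality bound : t + C.card ≤ n
  have hcard : t + C.card ≤ n := by
    rcases Nat.eq_zero_or_pos t with ht0 | htpos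
    · subst ht0
      simpa using (Finset.card_le_univ C).trans_eq (by simp)
    · -- there is a point with tail of length exactly t
      have hne : f ^ ((t - 1) + p) ≠ f ^ (t - 1) := by
        intro hcontra
        have := htmin (t - 1) p hp hcontra
        omega
      obtain ⟨x, hx⟩ : ∃ x, (f ^ ((t - 1) + p)) x ≠ (f ^ (t - 1)) x := by
        by_contra hall
        push_neg at hall
        exact hne (funext hall)
      have hnotC : ∀ i < t, (f ^ i) x ∉ C := by
        intro i hi hmem
        apply hx
        have hfixi : (f ^ p) ((f ^ i) x) = (f ^ i) x := hfixC _ hmem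
        calc (f ^ ((t - 1) + p)) x
            = (f ^ (t - 1 - i)) ((f ^ p) ((f ^ i) x)) := by
              rw [show (t - 1) + p = ((t - 1 - i) + p) + i by omega,
                end_pow_add_apply, end_pow_add_apply]
          _ = (f ^ (t - 1 - i)) ((f ^ i) x) := by rw [hfixi]
          _ = (f ^ (t - 1)) x := by
              rw [← end_pow_add_apply, show t - 1 - i + i = t - 1 by omega]
      have hinj : ∀ i < t, ∀ j < t, (f ^ i) x = (f ^ j) x → i = j := by
        have key : ∀ i j, i < j → j < t → (f ^ i) x = (f ^ j) x → False := by
          intro i j hij hjt heq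
          -- (f^i) x is periodic with period j - i, hence in C
          have hper' : ∀ m : ℕ, (f ^ (m * (j - i))) ((f ^ i) x) = (f ^ i) x := by
            intro m
            induction m with
            | zero => simp only [Nat.zero_mul, pow_zero]; rfl
            | succ m ih =>
                have : (m + 1) * (j - i) = (m * (j - i)) + (j - i) := by ring
                rw [this, end_pow_add_apply]
                have : (f ^ (j - i)) ((f ^ i) x) = (f ^ i) x := by
                  rw [← end_pow_add_apply]
                  have : j - i + i = j := by omega
                  rw [this, ← heq]
                rw [this, ih]
            
          have hmem : (f ^ i) x ∈ C := by
            have h1 := hper' t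
            have hbig : t ≤ t * (j - i) := Nat.le_mul_of_pos_right t (by omega)
            have harith : t * (j - i) = t + (t * (j - i) - t) := by omega
            rw [harith, end_pow_add_apply] at h1
            rw [← h1]
            exact (hmemC _).mpr ⟨_, rfl⟩
          exact hnotC i (by omega) hmem
        intro i hi j hj heq
        rcases lt_trichotomy i j with h | h | h
        · exact absurd (key i j h hj heq) (by simp)
        · exact h
        · exact absurd (key j i h hi heq.symm) (by simp)
      set T : Finset (Fin n) := (Finset.range t).image (fun i => (f ^ i) x) with hTdef
      have hTcard : T.card = t := by
        rw [hTdef, Finset.card_image_of_injOn, Finset.card_range]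
        intro i hi j hj heq
        exact hinj i (Finset.mem_range.mp hi) j (Finset.mem_range.mp hj) heq
      have hdisj : Disjoint T C := by
        rw [Finset.disjoint_left]
        intro a haT haC
        obtain ⟨i, hi, rfl⟩ := Finset.mem_image.mp haT
        exact hnotC i (Finset.mem_range.mp hi) haC
      have := Finset.card_union_of_disjoint hdisj
      have hle : (T ∪ C).card ≤ n := by
        simpa using (Finset.card_le_univ (T ∪ C)).trans_eq (by simp)
      omega
  have hCnonempty : C.Nonempty := ⟨(f ^ t) ⟨0, hn⟩, (hmemC _).mpr ⟨_, rfl⟩⟩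
  have hCpos : 0 < C.card := Finset.card_pos.mpr hCnonempty
  have htn : t < n := by omega
  refine ⟨htn, ?_⟩
  have hcardle : Fintype.card C ≤ Fintype.card (Fin (n - t)) := by
    rw [Fintype.card_coe, Fintype.card_fin]
    omega
  obtain ⟨ι⟩ := Function.Embedding.nonempty_iff_card_le.mpr hcardle
  refine ⟨Equiv.Perm.viaEmbeddingHom ι e, ?_⟩
  rw [show Equiv.Perm.viaEmbeddingHom ι e = (Equiv.Perm.viaEmbeddingHom ι) e from rfl]
  rw [orderOf_injective _ (Equiv.Perm.viaEmbeddingHom_injective ι) e]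
  exact horder

lemma sufficiency {n t : ℕ} (ht : t < n) (g : Equiv.Perm (Fin (n - t))) :
    ∃ f : Function.End (Fin n), IsThresholdPeriod f t (orderOf g) := by
  classical
  have hk : 1 ≤ n - t := by omega
  set p := orderOf g with hpdef
  have hp : 0 < p := orderOf_pos g
  have hle : n - t ≤ n := Nat.sub_le n t
  set f : Function.End (Fin n) := fun x =>
    if h : (x : ℕ) < n - t then Fin.castLE hle (g ⟨x, h⟩)
    else ⟨(x : ℕ) - 1, by omega⟩ with hfdef
  have hcastlt : ∀ y : Fin (n - t), ((Fin.castLE hle y : Fin n) : ℕ) < n - t := fun y => y.2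
  have hfcast : ∀ y : Fin (n - t), f (Fin.castLE hle y) = Fin.castLE hle (g y) := by
    intro y
    show (if h : ((Fin.castLE hle y : Fin n) : ℕ) < n - t
      then Fin.castLE hle (g ⟨_, h⟩) else _) = _
    rw [dif_pos (hcastlt y)]
    congr 1
  -- L1 : powers on the core
  have L1 : ∀ (m : ℕ) (y : Fin (n - t)),
      (f ^ m) (Fin.castLE hle y) = Fin.castLE hle ((g ^ m) y) := by
    intro m
    induction m with
    | zero => intro y; simp only [pow_zero]; rfl
    | succ m ih =>
        intro y
        rw [end_pow_apply, hfcast, ih, perm_pow_apply]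
  -- tail points reach the core point ⟨n-t-1⟩
  have hcorept : n - t - 1 < n - t := by omega
  have Ltail0 : ∀ d : ℕ, ∀ x : Fin n, (x : ℕ) = n - t + d →
      d + 1 ≤ t ∧ (f ^ (d + 1)) x = Fin.castLE hle ⟨n - t - 1, hcorept⟩ := by
    intro d
    induction d with
    | zero =>
        intro x hx
        have hxn : (x : ℕ) < n := x.2
        constructor
        · omega
        · rw [pow_one]
          show (if h : (x : ℕ) < n - t then _ else (⟨(x : ℕ) - 1, _⟩ : Fin n)) = _
          rw [dif_neg (by omega)]
          apply Fin.ext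
          simp [hx]
    | succ d ih =>
        intro x hx
        have hxn : (x : ℕ) < n := x.2
        have hfx : f x = ⟨(x : ℕ) - 1, by omega⟩ := by
          show (if h : (x : ℕ) < n - t then _ else _) = _
          rw [dif_neg (by omega)]
        have hfxval : ((f x : Fin n) : ℕ) = n - t + d := by rw [hfx]; simp; omega
        obtain ⟨h1, h2⟩ := ih (f x) hfxval
        refine ⟨by omega, ?_⟩
        rw [end_pow_apply, h2]
  -- every point reaches the core within t steps
  have Ltail : ∀ x : Fin n, ∃ i ≤ t, ∃ y : Fin (n - t), (f ^ i) x = Fin.castLE hle y := by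
    intro x
    by_cases hx : (x : ℕ) < n - t
    · exact ⟨0, Nat.zero_le t, ⟨(x : ℕ), hx⟩, by simp only [pow_zero]; rfl⟩
    · obtain ⟨h1, h2⟩ := Ltail0 ((x : ℕ) - (n - t)) x (by omega)
      exact ⟨_, h1, _, h2⟩
  have hcastinj : Function.Injective (Fin.castLE hle) := fun a b hab => by
    apply Fin.ext
    have : ((Fin.castLE hle a : Fin n) : ℕ) = ((Fin.castLE hle b : Fin n) : ℕ) :=
      congrArg Fin.val hab
    exact this
  -- the top tail point has tail of length exactly t
  have htop : ∀ j ≤ t, 1 ≤ t → (f ^ j) ⟨n - 1, by omega⟩ = ⟨n - 1 - j, by omega⟩ := by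
    intro j
    induction j with
    | zero =>
        intro _ _
        simp only [pow_zero]
        apply Fin.ext
        show n - 1 = n - 1 - 0
        omega
    | succ j ih =>
        intro hj h1t
        rw [end_pow_apply']
        rw [ih (by omega) h1t]
        show (if h : (n - 1 - j : ℕ) < n - t then _ else (⟨n - 1 - j - 1, _⟩ : Fin n)) = _
        rw [dif_neg (by omega)]
        apply Fin.ext
        show n - 1 - j - 1 = n - 1 - (j + 1)
        omega
  refine ⟨f, hp, ?_, ?_, ?_⟩
  · -- f ^ (t + p) = f ^ t
    funext x
    obtain ⟨i, hi, y, hy⟩ := Ltail x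
    have e1 : (f ^ (t + p)) x = Fin.castLE hle ((g ^ ((t - i) + p)) y) := by
      have : t + p = ((t - i) + p) + i := by omega
      rw [this, end_pow_add_apply, hy, L1]
    have e2 : (f ^ t) x = Fin.castLE hle ((g ^ (t - i)) y) := by
      have : t = (t - i) + i := by omega
      conv_lhs => rw [this]
      rw [end_pow_add_apply, hy, L1]
    rw [e1, e2]
    congr 1
    rw [pow_add, hpdef, pow_orderOf_eq_one, mul_one]
  · -- minimality of t
    intro t' p' hp' heq
    by_contra hcon
    push_neg at hcon
    have h1t : 1 ≤ t := by omega
    set z : Fin n := ⟨n - 1, by omega⟩ with hzdef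
    have hz1 : (f ^ t') z = ⟨n - 1 - t', by omega⟩ := htop t' (by omega) h1t
    have h3 : ((f ^ (t' + p')) z : Fin n).val = n - 1 - t' := by
      rw [congrFun heq z, hz1]
    by_cases hcase : t' + p' ≤ t
    · have hz2 : (f ^ (t' + p')) z = ⟨n - 1 - (t' + p'), by omega⟩ :=
        htop (t' + p') hcase h1t
      have h2 : ((f ^ (t' + p')) z : Fin n).val = n - 1 - (t' + p') := by rw [hz2]
      omega
    · have hz3 : (f ^ t) z = Fin.castLE hle ⟨n - t - 1, hcorept⟩ := by
        obtain ⟨_, h2⟩ := Ltail0 (t - 1) z (by show n - 1 = n - t + (t - 1); omega)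
        have h4 : t - 1 + 1 = t := by omega
        rwa [h4] at h2
      have hz2 : (f ^ ((t' + p' - t) + t)) z
          = Fin.castLE hle ((g ^ (t' + p' - t)) ⟨n - t - 1, hcorept⟩) := by
        rw [end_pow_add_apply, hz3, L1]
      have h2 : ((f ^ (t' + p')) z : Fin n).val < n - t := by
        rw [show t' + p' = (t' + p' - t) + t by omega, hz2]
        exact hcastlt _
      omega
  · -- minimality of p
    intro p' hp' heq
    have hg : g ^ p' = 1 := by
      have hgg : g ^ (t + p') = g ^ t := by
        apply Equiv.ext
        intro y
        apply hcastinj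
        rw [← L1, ← L1, heq]
      rw [pow_add] at hgg
      have h5 : g ^ t * g ^ p' = g ^ t * 1 := by rw [mul_one]; exact hgg
      exact mul_left_cancel h5
    exact Nat.le_of_dvd hp' (orderOf_dvd_of_pow_eq_one hg)

theorem card_threshold_period_pairs (n : ℕ) (hn : 1 ≤ n) :
    Set.ncard {tp : ℕ × ℕ | ∃ f : Function.End (Fin n), IsThresholdPeriod f tp.1 tp.2} =
      ∑ k ∈ Finset.Icc 1 n, numOrders k := by
  classical
  set F : Finset (ℕ × ℕ) := (Finset.range n).biUnion fun t =>
      (Finset.univ.image fun g : Equiv.Perm (Fin (n - t)) => orderOf g).image (Prod.mk t)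
    with hFdef
  have hset : {tp : ℕ × ℕ | ∃ f : Function.End (Fin n), IsThresholdPeriod f tp.1 tp.2}
      = ↑F := by
    ext ⟨t, p⟩
    simp only [Set.mem_setOf_eq, Finset.coe_biUnion, Set.mem_iUnion, hFdef,
      Finset.mem_coe, Finset.mem_biUnion, Finset.mem_range, Finset.mem_image,
      Finset.mem_univ, true_and, exists_exists_eq_and, Prod.mk.injEq]
    constructor
    · rintro ⟨f, hf⟩
      obtain ⟨htn, g, hg⟩ := necessity hn f t p hf
      exact ⟨t, htn, g, rfl, hg⟩
    · rintro ⟨t', ht', g, rfl, rfl⟩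
      exact sufficiency ht' g
  rw [hset, Set.ncard_coe_finset, hFdef]
  rw [Finset.card_biUnion]
  · have hcardeq : ∀ t ∈ Finset.range n,
        ((Finset.univ.image fun g : Equiv.Perm (Fin (n - t)) => orderOf g).image
          (Prod.mk t)).card = numOrders (n - t) := by
      intro t _
      rw [Finset.card_image_of_injective _ (fun a b hab => (Prod.ext_iff.mp hab).2)]
      rfl
    rw [Finset.sum_congr rfl hcardeq]
    have hstep : ∀ t ∈ Finset.range n, numOrders (n - t) = numOrders ((n - 1 - t) + 1) := by
      intro t htmem
      rw [Finset.mem_range] at htmem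
      congr 1
      omega
    rw [Finset.sum_congr rfl hstep, Finset.sum_range_reflect (fun j => numOrders (j + 1)) n]
    apply Finset.sum_nbij' (i := fun j => j + 1) (j := fun k => k - 1)
    · intro a ha
      rw [Finset.mem_range] at ha
      rw [Finset.mem_Icc]
      omega
    · intro a ha
      rw [Finset.mem_Icc] at ha
      rw [Finset.mem_range]
      omega
    · intro a _; omega
    · intro a ha
      rw [Finset.mem_Icc] at ha
      omega
    · intro a _; rfl
  · intro t₁ _ t₂ _ hne
    rw [Function.onFun, Finset.disjoint_left]
    rintro ⟨a, b⟩ h1 h2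
    rw [Finset.mem_image] at h1 h2
    obtain ⟨_, _, h1'⟩ := h1
    obtain ⟨_, _, h2'⟩ := h2
    exact hne ((Prod.ext_iff.mp h1').1.trans (Prod.ext_iff.mp h2').1.symm)
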